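/- Let (τₖ) be reals, let m ≤ n, and for each k ∈ {m, …, n−1} let σₖ : ℝ → ℝ be continuous in a neighborhood of θ and differentiable at θ. Define W_m(θ') = 0 for all θ' and W_{k+1}(θ') = (Wₖ(θ') + σₖ(θ') − τₖ)⁺. If Wₖ(θ) + σₖ(θ) − τₖ > 0 for all k ∈ {m, …, n−1}, then θ' ↦ Wₙ(θ') is differentiable at θ and W'ₙ(θ) = Σ_{k=m}^{n−1} σ'ₖ(θ). -/

import Mathlib

/-- during a busy period the workload derivative is the
accumulated sum of the service-time derivatives: with `W_m ≡ 0`, the Lindley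
recursion `W_{k+1}(θ') = (W_k(θ') + σ_k(θ') − τ_k)⁺` for `m ≤ k < n`, each
`σ_k` continuous near `θ` and differentiable at `θ`, and
`W_k(θ) + σ_k(θ) − τ_k > 0` for all `m ≤ k < n`, the map `θ' ↦ W_n(θ')` is
differentiable at `θ` with derivative `Σ_{k=m}^{n−1} σ'_k(θ)`. -/
theorem stmt_13 (τ : ℕ → ℝ) (m n : ℕ) (hmn : m ≤ n) (θ : ℝ) (σ : ℕ → ℝ → ℝ)
    (hcont : ∀ k ∈ Finset.Ico m n, ∀ᶠ θ' in nhds θ, ContinuousAt (σ k) θ')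
    (hdiff : ∀ k ∈ Finset.Ico m n, DifferentiableAt ℝ (σ k) θ)
    (W : ℕ → ℝ → ℝ)
    (hWm : ∀ θ', W m θ' = 0)
    (hrec : ∀ k, m ≤ k → k < n → ∀ θ',
      W (k + 1) θ' = max (W k θ' + σ k θ' - τ k) 0)
    (hpos : ∀ k ∈ Finset.Ico m n, 0 < W k θ + σ k θ - τ k) :
    HasDerivAt (W n) (∑ k ∈ Finset.Ico m n, deriv (σ k) θ) θ := by
  have hσcont : ∀ k ∈ Finset.Ico m n, ContinuousAt (σ k) θ := fun k hk =>
    ((hcont k hk).self_of_nhds)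
  -- key: eventual equality with the affine sum
  have key : ∀ N, m ≤ N → N ≤ n →
      W N =ᶠ[nhds θ] fun θ' => ∑ k ∈ Finset.Ico m N, (σ k θ' - τ k) := by
    intro N hmN
    induction N, hmN using Nat.le_induction with
    | base =>
      intro _
      exact Filter.Eventually.of_forall (fun θ' => by simp [hWm θ'])
    | succ N hmN ih =>
      intro hN1
      have hNn : N < n := hN1
      have ih' := ih hNn.le
      set G : ℝ → ℝ := fun θ' => (∑ k ∈ Finset.Ico m N, (σ k θ' - τ k)) + σ N θ' - τ N with hG
      have hGcont : ContinuousAt G θ := by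
        have hsum : ContinuousAt (fun θ' => ∑ k ∈ Finset.Ico m N, (σ k θ' - τ k)) θ := by
          refine DifferentiableAt.continuousAt (𝕜 := ℝ) ?_
          refine DifferentiableAt.fun_sum (fun k hk => ?_)
          have hk' : k ∈ Finset.Ico m n := by
            rw [Finset.mem_Ico] at hk ⊢
            exact ⟨hk.1, hk.2.trans hNn⟩
          exact (hdiff k hk').sub_const (τ k)
        exact (hsum.add (hσcont N (Finset.mem_Ico.mpr ⟨hmN, hNn⟩))).sub continuousAt_const
      have hGθ : G θ = W N θ + σ N θ - τ N := by
        rw [hG]; simp only; rw [ih'.eq_of_nhds]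
      have hGpos : 0 < G θ := by
        rw [hGθ]; exact hpos N (Finset.mem_Ico.mpr ⟨hmN, hNn⟩)
      have hev : ∀ᶠ θ' in nhds θ, 0 < G θ' := hGcont.eventually (eventually_gt_nhds hGpos)
      filter_upwards [hev, ih'] with θ' h1 h2
      rw [hrec N hmN hNn θ', h2, Finset.sum_Ico_succ_top hmN, max_eq_left h1.le]
      ring
  have hF : HasDerivAt (fun θ' => ∑ k ∈ Finset.Ico m n, (σ k θ' - τ k))
      (∑ k ∈ Finset.Ico m n, deriv (σ k) θ) θ := by
    apply HasDerivAt.fun_sum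
    intro k hk
    exact ((hdiff k hk).hasDerivAt).sub_const (τ k)
  exact hF.congr_of_eventuallyEq (key n hmn le_rfl)
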